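/- Let Q be a commutative unital quantale and Σ a class of ideals of Q with the quantale topology. Let M(Σ) denote the set of maximal elements of Σ (under inclusion), with the subspace topology. Then Σ is quasi-compact if and only if (a) every I ∈ Σ is contained in some J ∈ M(Σ), and (b) M(Σ) is quasi-compact. -/

import Mathlib

namespace QuantalePaper

/-- An ideal of a complete lattice: nonempty, downward closed, closed under binary joins. -/
structure QIdeal (Q : Type*) [CompleteLattice Q] where
  carrier : Set Q
  nonempty' : carrier.Nonempty
  sup_mem' : ∀ ⦃x⦄, x ∈ carrier → ∀ ⦃y⦄, y ∈ carrier → x ⊔ y ∈ carrier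
  lower' : ∀ ⦃x⦄, x ∈ carrier → ∀ ⦃l : Q⦄, l ≤ x → l ∈ carrier

namespace QIdeal

variable {Q : Type*} [CompleteLattice Q]

instance : SetLike (QIdeal Q) Q where
  coe := carrier
  coe_injective := by rintro ⟨a,_,_,_⟩ ⟨b,_,_,_⟩ h; simpa using h

instance : PartialOrder (QIdeal Q) := .ofSetLike (QIdeal Q) Q

/-- A proper ideal. -/
def IsProper (I : QIdeal Q) : Prop := (⊤ : Q) ∉ I

/-- A maximal ideal: a proper ideal maximal among proper ideals. -/
def IsMaximal (I : QIdeal Q) : Prop :=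
  I.IsProper ∧ ∀ J : QIdeal Q, J.IsProper → I ≤ J → J = I

/-- A prime ideal. -/
def IsPrime [Mul Q] (I : QIdeal Q) : Prop :=
  I.IsProper ∧ ∀ x y : Q, x * y ∈ I → x ∈ I ∨ y ∈ I

end QIdeal

variable {Q : Type*} [CompleteLattice Q]

/-- The subbasic closed set `I↑ ∩ Σ` inside the subtype of a class `S` of ideals. -/
def up (S : Set (QIdeal Q)) (I : QIdeal Q) : Set ↥S := {J : ↥S | (I : Set Q) ⊆ (J : QIdeal Q)}

/-- The quantale topology on a class `S` of ideals, generated by the sets `up S I`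
as a subbasis of closed sets. -/
def qTop (S : Set (QIdeal Q)) : TopologicalSpace ↥S :=
  .generateFrom {U | ∃ I : QIdeal Q, U = (up S I)ᶜ}

/-- `X↑` for a set `X` of ideals: members of `S` containing the intersection `⋀X`,
with `∅↑ = ∅`. -/
def upSet (S : Set (QIdeal Q)) (X : Set (QIdeal Q)) : Set ↥S :=
  {J : ↥S | X.Nonempty ∧ ∀ x : Q, (∀ I ∈ X, x ∈ I) → x ∈ (J : QIdeal Q)}

/-- Every open set of the quantale topology is downward closed. -/
lemma open_dw (S : Set (QIdeal Q)) {U : Set ↥S}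
    (h : TopologicalSpace.GenerateOpen {U | ∃ I : QIdeal Q, U = (up S I)ᶜ} U) :
    ∀ {I J : ↥S}, (J : QIdeal Q) ≤ (I : QIdeal Q) → I ∈ U → J ∈ U := by
  induction h with
  | basic V hV =>
      obtain ⟨K, rfl⟩ := hV
      intro I J hJI hI hKJ
      exact hI fun x hx => hJI (hKJ hx)
  | univ => intro I J _ _; trivial
  | inter U V _ _ ihU ihV => intro I J h hI; exact ⟨ihU h hI.1, ihV h hI.2⟩
  | sUnion K _ ih =>
      rintro I J h ⟨V, hV, hIV⟩
      exact ⟨V, hV, ih V hV h hIV⟩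

lemma isClosed_up (S : Set (QIdeal Q)) (I : QIdeal Q) : @IsClosed _ (qTop S) (up S I) := by
  letI := qTop S
  exact ⟨TopologicalSpace.GenerateOpen.basic _ ⟨I, rfl⟩⟩

theorem stmt5 [CommMonoid Q] [IsQuantale Q] (htop : (1 : Q) = ⊤) (S : Set (QIdeal Q)) :
    @CompactSpace ↥S (qTop S) ↔
      ((∀ I ∈ S, ∃ J ∈ S, I ≤ J ∧ ∀ K ∈ S, J ≤ K → K = J) ∧
        @IsCompact ↥S (qTop S)
          {I : ↥S | ∀ J : ↥S, (I : QIdeal Q) ≤ (J : QIdeal Q) → J = I}) := by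
  letI : TopologicalSpace ↥S := qTop S
  have hopen : ∀ {U : Set ↥S}, IsOpen U →
      ∀ {I J : ↥S}, (J : QIdeal Q) ≤ (I : QIdeal Q) → I ∈ U → J ∈ U :=
    fun hU => open_dw S hU
  -- membership of a maximal ideal in M
  have hmemM : ∀ (J : QIdeal Q) (hJS : J ∈ S), (∀ K ∈ S, J ≤ K → K = J) →
      (⟨J, hJS⟩ : ↥S) ∈ {I : ↥S | ∀ J' : ↥S, (I : QIdeal Q) ≤ (J' : QIdeal Q) → J' = I} := by
    intro J hJS hmax K hK
    exact Subtype.ext (hmax (K : QIdeal Q) K.2 hK)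
  constructor
  · intro hc
    have ha : ∀ I ∈ S, ∃ J ∈ S, I ≤ J ∧ ∀ K ∈ S, J ≤ K → K = J := by
      intro I hI
      have hzorn : ∀ c ⊆ S, IsChain (· ≤ ·) c → ∀ y ∈ c, ∃ ub ∈ S, ∀ z ∈ c, z ≤ ub := by
        intro c hcS hchain y hy
        haveI : Nonempty ↥c := ⟨⟨y, hy⟩⟩
        have hne : (⋂ J : ↥c, up S (J : QIdeal Q)).Nonempty := by
          apply IsCompact.nonempty_iInter_of_directed_nonempty_isCompact_isClosed
          · rintro ⟨J, hJ⟩ ⟨K, hK⟩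
            rcases hchain.total hJ hK with h | h
            · exact ⟨⟨K, hK⟩, fun L hL x hx => hL (h hx), fun L hL => hL⟩
            · exact ⟨⟨J, hJ⟩, fun L hL => hL, fun L hL x hx => hL (h hx)⟩
          · intro J
            exact ⟨⟨(J : QIdeal Q), hcS J.2⟩, fun x hx => hx⟩
          · intro J
            exact (isClosed_up S _).isCompact
          · intro J
            exact isClosed_up S _
        obtain ⟨K, hK⟩ := hne
        refine ⟨(K : QIdeal Q), K.2, fun z hz => ?_⟩
        have := Set.mem_iInter.mp hK ⟨z, hz⟩
        exact fun x hx => this hx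
      obtain ⟨m, hIm, hmS, hmax⟩ := zorn_le_nonempty₀ S hzorn I hI
      exact ⟨m, hmS, hIm, fun K hK hmK => le_antisymm (hmax hK hmK) hmK⟩
    refine ⟨ha, ?_⟩
    refine isCompact_of_finite_subcover fun {ι} U hU hMU => ?_
    have huniv : (Set.univ : Set ↥S) ⊆ ⋃ i, U i := by
      intro x _
      obtain ⟨J, hJS, hxJ, hmax⟩ := ha (x : QIdeal Q) x.2
      have hJM := hmemM J hJS hmax
      obtain ⟨V, ⟨i, rfl⟩, hJi⟩ := hMU hJM
      exact Set.mem_iUnion.mpr ⟨i, hopen (hU i) hxJ hJi⟩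
    obtain ⟨t, ht⟩ := CompactSpace.isCompact_univ.elim_finite_subcover U hU huniv
    exact ⟨t, fun x _ => ht (Set.mem_univ x)⟩
  · rintro ⟨ha, hM⟩
    refine ⟨isCompact_of_finite_subcover fun {ι} U hU hcov => ?_⟩
    obtain ⟨t, ht⟩ := hM.elim_finite_subcover U hU fun x _ => hcov (Set.mem_univ x)
    refine ⟨t, fun x _ => ?_⟩
    obtain ⟨J, hJS, hxJ, hmax⟩ := ha (x : QIdeal Q) x.2
    have hJM := hmemM J hJS hmax
    obtain ⟨i, hi, hJi⟩ := Set.mem_iUnion₂.mp (ht hJM)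
    exact Set.mem_biUnion hi (hopen (hU i) hxJ hJi)

end QuantalePaper
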